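/- For all t₁, u₁, t₂, u₂ ∈ F and every ε ∈ F with ε ≠ 0, the element x₊(t₁,u₁) · h(ε) · w · x₊(t₂,u₂) lies in the product set U · U⁻ · U · U⁻ (this is the big Bruhat cell case of the factorization Sz(q) = U·U⁻·U·U⁻). -/

import Mathlib

open Matrix Pointwise

/-- The Suzuki unipotent `x₊(t,u)` as a 4×4 matrix. -/
def suzXp {F : Type*} [Field F] (θ : ℕ) (t u : F) : Matrix (Fin 4) (Fin 4) F :=
  !![1, t ^ θ, u, t ^ (2 * θ + 1) + t ^ θ * u + u ^ (2 * θ);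
     0, 1, t, t ^ (θ + 1) + u;
     0, 0, 1, t ^ θ;
     0, 0, 0, 1]

/-- The antidiagonal permutation matrix `w` (1-indexed: entry 1 iff i+j = 5). -/
def suzW {F : Type*} [Field F] : Matrix (Fin 4) (Fin 4) F :=
  Matrix.of fun i j => if (i : ℕ) + (j : ℕ) = 3 then 1 else 0

/-- The torus element `h(ε) = diag(ε, ε^{2θ-1}, ε^{1-2θ}, ε⁻¹)`. -/
def suzH {F : Type*} [Field F] (θ : ℕ) (ε : F) : Matrix (Fin 4) (Fin 4) F :=
  Matrix.diagonal ![ε, ε ^ (2 * (θ : ℤ) - 1), ε ^ (1 - 2 * (θ : ℤ)), ε⁻¹]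

/-- The opposite unipotent `x₋(t,u) = w·x₊(t,u)·w`. -/
def suzXm {F : Type*} [Field F] (θ : ℕ) (t u : F) : Matrix (Fin 4) (Fin 4) F :=
  suzW * suzXp θ t u * suzW

/-- `U = {x₊(t,u)}` viewed as a subset of `GL(4,F)`. -/
def suzU (F : Type*) [Field F] (θ : ℕ) : Set (GL (Fin 4) F) :=
  {g | ∃ t u : F, (↑g : Matrix (Fin 4) (Fin 4) F) = suzXp θ t u}

/-- `U⁻ = {x₋(t,u)}` viewed as a subset of `GL(4,F)`. -/
def suzUm (F : Type*) [Field F] (θ : ℕ) : Set (GL (Fin 4) F) :=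
  {g | ∃ t u : F, (↑g : Matrix (Fin 4) (Fin 4) F) = suzXm θ t u}

section SuzukiLemmas

variable {F : Type*} [Field F]

private lemma suzW_eq : (suzW (F := F)) = !![0,0,0,1; 0,0,1,0; 0,1,0,0; 1,0,0,0] := by
  ext i j
  fin_cases i <;> fin_cases j <;> rfl

private lemma suzW_mul_suzW : (suzW (F := F)) * suzW = 1 := by
  ext i j
  fin_cases i <;> fin_cases j <;>
    simp [suzW_eq, Matrix.mul_apply, Fin.sum_univ_four, Matrix.one_apply,
      Matrix.vecHead, Matrix.vecTail]

private lemma suzXm_eq (θ : ℕ) (t u : F) : suzXm θ t u =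
    !![1, 0, 0, 0;
       t ^ θ, 1, 0, 0;
       t ^ (θ + 1) + u, t, 1, 0;
       t ^ (2 * θ + 1) + t ^ θ * u + u ^ (2 * θ), u, t ^ θ, 1] := by
  ext i j
  fin_cases i <;> fin_cases j <;>
    simp [suzXm, suzW_eq, suzXp, Matrix.mul_apply, Fin.sum_univ_four,
      Matrix.vecHead, Matrix.vecTail]

private lemma suzXp_mul (n : ℕ) (h2 : (2:F) = 0)
    (hfrob : ∀ x y : F, (x + y) ^ (n+1) = x ^ (n+1) + y ^ (n+1))
    (hq : ∀ x : F, ((x ^ (n+1)) ^ (n+1)) ^ 2 = x)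
    (a b c d : F) :
    suzXp (n+1) a b * suzXp (n+1) c d
      = suzXp (n+1) (a + c) (b + d + a ^ (n+1) * c) := by
  have hT : (b + d + a ^ (n+1) * c) ^ (n+1)
      = b ^ (n+1) + d ^ (n+1) + (a ^ (n+1)) ^ (n+1) * c ^ (n+1) := by
    rw [hfrob, hfrob, mul_pow]
  ext i j
  fin_cases i <;> fin_cases j <;>
    simp [suzXp, Matrix.mul_apply, Fin.sum_univ_four, Matrix.vecHead, Matrix.vecTail]
  · linear_combination - hfrob a c
  · ring
  · linear_combination
      (-(((a+c)^(n+1) + a^(n+1) + c^(n+1)) * (a+c) + (b + d + a^(n+1)*c))) * hfrob a c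
      - ((b + d + a^(n+1)*c)^(n+1) + b^(n+1) + d^(n+1) + (a^(n+1))^(n+1) * c^(n+1)) * hT
      - (c^(n+1))^2 * hq a
      - ((a^(n+1))^2*c + a^(n+1)*c^(n+1)*a + a^(n+1)*c^(n+1)*c + (c^(n+1))^2*a
         + b^(n+1)*d^(n+1) + b^(n+1)*(a^(n+1))^(n+1)*c^(n+1)
         + d^(n+1)*(a^(n+1))^(n+1)*c^(n+1)) * h2
  · ring
  · linear_combination (-(a + c)) * hfrob a c - a^(n+1)*c*h2
  · linear_combination - hfrob a c

private lemma suzXp_zero (n : ℕ) : suzXp (F := F) (n+1) 0 0 = 1 := by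
  ext i j
  fin_cases i <;> fin_cases j <;>
    simp [suzXp, Matrix.one_apply, Matrix.vecHead, Matrix.vecTail]

private lemma suzXm_mul (n : ℕ) (h2 : (2:F) = 0)
    (hfrob : ∀ x y : F, (x + y) ^ (n+1) = x ^ (n+1) + y ^ (n+1))
    (hq : ∀ x : F, ((x ^ (n+1)) ^ (n+1)) ^ 2 = x)
    (a b c d : F) :
    suzXm (n+1) a b * suzXm (n+1) c d
      = suzXm (n+1) (a + c) (b + d + a ^ (n+1) * c) := by
  have hWW : ∀ z : Matrix (Fin 4) (Fin 4) F, suzW * (suzW * z) = z := by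
    intro z; rw [← mul_assoc, suzW_mul_suzW, one_mul]
  have h := suzXp_mul n h2 hfrob hq a b c d
  simp only [suzXm, mul_assoc, hWW]
  rw [← h, mul_assoc]

private lemma suzXm_zero (n : ℕ) : suzXm (F := F) (n+1) 0 0 = 1 := by
  rw [suzXm, suzXp_zero, mul_one, suzW_mul_suzW]


end SuzukiLemmas

section Claim
variable {F : Type*} [Field F]

-- P := 2*n^2+4*n+1  (= q - 1)
private lemma suzStep1 (n : ℕ) (h2 : (2:F) = 0) (e i : F)
    (hei1 : e * i = 1)
    (iP : i ^ (2*n^2+4*n+1) = 1) (eP : e ^ (2*n^2+4*n+1) = 1) :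
    suzXp (n+1) 0 (e^(n+1)) * suzXm (n+1) (i^(2*n+1)) (i^(n+1))
      = !![0,0,0,e; 0,0,e^(2*n+1),e^(n+1); 0,i^(2*n+1),1,0; i,i^(n+1),e^n,1] := by
  have hein : ∀ k : ℕ, (e:F)^k * i^k = 1 := fun k => by rw [← mul_pow, hei1, one_pow]
  have key : ∀ (k a b : ℕ), a + b = (2*n^2+4*n+1)*k → (i:F)^a = e^b := by
    intro k a b hab
    calc (i:F)^a = i^a * (e^b * i^b) := by rw [hein b, mul_one]
      _ = e^b * i^(a+b) := by rw [pow_add]; ring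
      _ = e^b := by rw [hab, pow_mul, iP, one_pow, mul_one]
  have hBC : (e:F)^(n+1) * i^(n+1) = 1 := hein (n+1)
  have hAθ : ((i:F)^(2*n+1))^(n+1) = e^n := by
    rw [← pow_mul]; exact key 1 ((2*n+1)*(n+1)) n (by ring)
  have hA1 : ((i:F)^(2*n+1))^(n+1+1) = i^(n+1) := by
    rw [← pow_mul, show (2*n+1)*(n+1+1) = (2*n^2+4*n+1)+(n+1) by ring, pow_add, iP, one_mul]
  have hA3 : ((i:F)^(2*n+1))^(2*(n+1)+1) = i := by
    rw [← pow_mul, show (2*n+1)*(2*(n+1)+1) = (2*n^2+4*n+1)*2+1 by ring, pow_add,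
      pow_mul, iP, one_pow, one_mul, pow_one]
  have hC2 : ((i:F)^(n+1))^(2*(n+1)) = i := by
    rw [← pow_mul, show (n+1)*(2*(n+1)) = (2*n^2+4*n+1)+1 by ring, pow_add, iP, one_mul, pow_one]
  have hB2 : ((e:F)^(n+1))^(2*(n+1)) = e := by
    rw [← pow_mul, show (n+1)*(2*(n+1)) = (2*n^2+4*n+1)+1 by ring, pow_add, eP, one_mul, pow_one]
  have hAθC : ((i:F)^(2*n+1))^(n+1) * i^(n+1) = i := by
    rw [← pow_mul, ← pow_add, show (2*n+1)*(n+1)+(n+1) = (2*n^2+4*n+1)+1 by ring,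
      pow_add, iP, one_mul, pow_one]
  have hBA : (e:F)^(n+1) * i^(2*n+1) = i^n := by
    have h' : (e:F)^(n+1) * i^(2*n+1) = (e^(n+1) * i^(n+1)) * i^n := by
      rw [show 2*n+1 = (n+1)+n by ring, pow_add]; ring
    rw [h', hBC, one_mul]
  have heC : (e:F) * i^(n+1) = i^n := by
    have h' : (e:F) * i^(n+1) = (e*i) * i^n := by rw [pow_succ' i n]; ring
    rw [h', hei1, one_mul]
  have hBi : (e:F)^(n+1) * i = e^n := by
    have h' : (e:F)^(n+1) * i = (e*i) * e^n := by rw [pow_succ' e n]; ring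
    rw [h', hei1, one_mul]
  have hni : (i:F)^(2*n^2+2*n) = e^(2*n+1) := key 1 _ _ (by ring)
  have hBAθ : (e:F)^(n+1) * (i^(2*n+1))^(n+1) = e^(2*n+1) := by
    have h' : (e:F)^(n+1) * (i^(2*n+1))^(n+1) = (e^(n+1) * i^(n+1)) * i^(2*n^2+2*n) := by
      rw [← pow_mul, show (2*n+1)*(n+1) = (n+1)+(2*n^2+2*n) by ring, pow_add]; ring
    rw [h', hBC, one_mul, hni]
  rw [suzXm_eq]
  ext x y
  fin_cases x <;> fin_cases y <;>
    simp [suzXp, Matrix.mul_apply, Fin.sum_univ_four, Matrix.vecHead, Matrix.vecTail]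
  · -- (0,0)
    linear_combination (e^(n+1))*hA1 + 2*hBC
      + ((i^(2*n+1))^(2*(n+1)+1) + (i^(2*n+1))^(n+1)*i^(n+1) + (i^(n+1))^(2*(n+1)))*hB2
      + e*hA3 + e*hAθC + e*hC2 + 3*hei1 + 3*h2
  · -- (0,1)
    linear_combination hBA + i^(n+1)*hB2 + heC + i^n*h2
  · -- (0,2)
    linear_combination ((i^(2*n+1))^(n+1))*hB2 + e*hAθ + e^(n+1)*h2
  · -- (0,3)
    linear_combination hB2
  · -- (1,0)
    linear_combination hAθ + e^(n+1)*hA3 + e^(n+1)*hAθC + e^(n+1)*hC2 + 3*hBi + 2*e^n*h2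
  · -- (1,1)
    linear_combination hBC + h2
  · -- (1,2)
    linear_combination hBAθ
  · -- (2,0)
    linear_combination hA1 + i^(n+1)*h2
  · -- (3,0)
    linear_combination hA3 + hAθC + hC2 + i*h2
  · -- (3,2)
    linear_combination hAθ

private lemma suzStep2 (n : ℕ) (h2 : (2:F) = 0) (e i : F)
    (hei1 : e * i = 1)
    (iP : i ^ (2*n^2+4*n+1) = 1) (eP : e ^ (2*n^2+4*n+1) = 1) :
    suzXm (n+1) (i^(2*n+1)) 0
        * !![0,0,0,e; 0,0,e^(2*n+1),e^(n+1); 0,i^(2*n+1),1,0; i,i^(n+1),e^n,1]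
      = Matrix.diagonal ![e, e^(2*n+1), i^(2*n+1), i] * suzW := by
  have hein : ∀ k : ℕ, (e:F)^k * i^k = 1 := fun k => by rw [← mul_pow, hei1, one_pow]
  have key : ∀ (k a b : ℕ), a + b = (2*n^2+4*n+1)*k → (i:F)^a = e^b := by
    intro k a b hab
    calc (i:F)^a = i^a * (e^b * i^b) := by rw [hein b, mul_one]
      _ = e^b * i^(a+b) := by rw [pow_add]; ring
      _ = e^b := by rw [hab, pow_mul, iP, one_pow, mul_one]
  have hBC : (e:F)^(n+1) * i^(n+1) = 1 := hein (n+1)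
  have hAθ : ((i:F)^(2*n+1))^(n+1) = e^n := by
    rw [← pow_mul]; exact key 1 ((2*n+1)*(n+1)) n (by ring)
  have hA1 : ((i:F)^(2*n+1))^(n+1+1) = i^(n+1) := by
    rw [← pow_mul, show (2*n+1)*(n+1+1) = (2*n^2+4*n+1)+(n+1) by ring, pow_add, iP, one_mul]
  have hA3 : ((i:F)^(2*n+1))^(2*(n+1)+1) = i := by
    rw [← pow_mul, show (2*n+1)*(2*(n+1)+1) = (2*n^2+4*n+1)*2+1 by ring, pow_add,
      pow_mul, iP, one_pow, one_mul, pow_one]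
  have hAθA : ((i:F)^(2*n+1))^(n+1) * i^(2*n+1) = i^(n+1) := by
    rw [← pow_mul, ← pow_add, show (2*n+1)*(n+1)+(2*n+1) = (2*n^2+4*n+1)+(n+1) by ring,
      pow_add, iP, one_mul]
  have hBA : (e:F)^(n+1) * i^(2*n+1) = i^n := by
    have h' : (e:F)^(n+1) * i^(2*n+1) = (e^(n+1) * i^(n+1)) * i^n := by
      rw [show 2*n+1 = (n+1)+n by ring, pow_add]; ring
    rw [h', hBC, one_mul]
  have heC : (e:F) * i^(n+1) = i^n := by
    have h' : (e:F) * i^(n+1) = (e*i) * i^n := by rw [pow_succ' i n]; ring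
    rw [h', hei1, one_mul]
  rw [suzXm_eq, suzW_eq]
  ext x y
  fin_cases x <;> fin_cases y <;>
    simp [Matrix.mul_apply, Fin.sum_univ_four, Matrix.diagonal,
      Matrix.vecHead, Matrix.vecTail]
  · -- (1,3)
    linear_combination e*hAθ + e^(n+1)*h2
  · -- (2,2)
    linear_combination hein (2*n+1) + h2
  · -- (2,3)
    linear_combination e*hA1 + heC + hBA + i^n*h2
  · -- (3,1)
    linear_combination hAθA + i^(n+1)*h2
  · -- (3,2)
    linear_combination hAθ + e^n*h2
  · -- (3,3)
    linear_combination e*hA3 + hei1 + h2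

private lemma suzClaimA (n : ℕ) (h2 : (2:F) = 0) (e i : F)
    (hei1 : e * i = 1)
    (iP : i ^ (2*n^2+4*n+1) = 1) (eP : e ^ (2*n^2+4*n+1) = 1) :
    suzXm (n+1) (i^(2*n+1)) 0
        * (suzXp (n+1) 0 (e^(n+1)) * suzXm (n+1) (i^(2*n+1)) (i^(n+1)))
      = Matrix.diagonal ![e, e^(2*n+1), i^(2*n+1), i] * suzW := by
  rw [suzStep1 n h2 e i hei1 iP eP, suzStep2 n h2 e i hei1 iP eP]

private lemma suzConj (n : ℕ) (h2 : (2:F) = 0) (e i : F)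
    (hei1 : e * i = 1)
    (iP : i ^ (2*n^2+4*n+1) = 1) (t u : F) :
    Matrix.diagonal ![e, e^(2*n+1), i^(2*n+1), i] * suzXm (n+1) t u
        * Matrix.diagonal ![i, i^(2*n+1), e^(2*n+1), e]
      = suzXm (n+1) (t*i^(4*n+2)) (u*i^(2*n+2)) := by
  have hein : ∀ k : ℕ, (e:F)^k * i^k = 1 := fun k => by rw [← mul_pow, hei1, one_pow]
  have key : ∀ (k a b : ℕ), a + b = (2*n^2+4*n+1)*k → (i:F)^a = e^b := by
    intro k a b hab
    calc (i:F)^a = i^a * (e^b * i^b) := by rw [hein b, mul_one]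
      _ = e^b * i^(a+b) := by rw [pow_add]; ring
      _ = e^b := by rw [hab, pow_mul, iP, one_pow, mul_one]
  have ired : ∀ (a k : ℕ), (i:F)^((2*n^2+4*n+1)*k + a) = i^a := by
    intro a k; rw [pow_add, pow_mul, iP, one_pow, one_mul]
  have hS1 : (t*i^(4*n+2))^(n+1) = t^(n+1)*e^(2*n) := by
    have hk := key 2 ((4*n+2)*(n+1)) (2*n) (by ring)
    rw [mul_pow, ← pow_mul, hk]
  have hS2 : (t*i^(4*n+2))^(n+1+1) = t^(n+1+1)*i^(2*n+2) := by
    rw [mul_pow, ← pow_mul, show (4*n+2)*(n+1+1) = (2*n^2+4*n+1)*2+(2*n+2) by ring, ired]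
  have hS3 : (t*i^(4*n+2))^(2*(n+1)+1) = t^(2*(n+1)+1)*i^2 := by
    rw [mul_pow, ← pow_mul, show (4*n+2)*(2*(n+1)+1) = (2*n^2+4*n+1)*4+2 by ring, ired]
  have hV2 : (u*i^(2*n+2))^(2*(n+1)) = u^(2*(n+1))*i^2 := by
    rw [mul_pow, ← pow_mul, show (2*n+2)*(2*(n+1)) = (2*n^2+4*n+1)*2+2 by ring, ired]
  rw [suzXm_eq, suzXm_eq]
  ext x y
  fin_cases x <;> fin_cases y <;>
    simp [Matrix.mul_apply, Fin.sum_univ_four, Matrix.diagonal,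
      Matrix.vecHead, Matrix.vecTail]
  · -- (0,0)
    linear_combination hei1
  · -- (1,0)
    linear_combination (-1)*hS1 + t^(n+1)*e^(2*n)*hei1
  · -- (1,1)
    linear_combination hein (2*n+1)
  · -- (2,0)
    linear_combination (-1)*hS2
  · -- (2,1)
    ring
  · -- (2,2)
    linear_combination hein (2*n+1)
  · -- (3,0)
    linear_combination (-1)*hS3 - hV2 - (u*i^(2*n+2))*hS1 - (t^(n+1)*u*i^2)*hein (2*n)
  · -- (3,1)
    ring
  · -- (3,2)
    linear_combination (-1)*hS1 + t^(n+1)*e^(2*n)*hei1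
  · -- (3,3)
    linear_combination hei1

private lemma suzDiagInv (n : ℕ) (e i : F) (hei1 : e * i = 1) :
    Matrix.diagonal ![(i:F), i^(2*n+1), e^(2*n+1), e]
        * Matrix.diagonal ![e, e^(2*n+1), i^(2*n+1), i] = 1 := by
  have hein : ∀ k : ℕ, (e:F)^k * i^k = 1 := fun k => by rw [← mul_pow, hei1, one_pow]
  ext x y
  fin_cases x <;> fin_cases y <;>
    simp [Matrix.mul_apply, Fin.sum_univ_four, Matrix.diagonal, Matrix.one_apply,
      Matrix.vecHead, Matrix.vecTail]
  · linear_combination hei1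
  · linear_combination hein (2*n+1)
  · linear_combination hein (2*n+1)
  · linear_combination hei1

end Claim

theorem suzuki_bigCell_mem_UUmUUm (m θ : ℕ) (hθ : θ = 2 ^ m)
    (F : Type*) [Field F] [Fintype F] (hF : Fintype.card F = 2 ^ (2 * m + 1))
    (t₁ u₁ t₂ u₂ : F) (ε : F) (hε : ε ≠ 0) (g : GL (Fin 4) F)
    (hg : (↑g : Matrix (Fin 4) (Fin 4) F) =
      suzXp θ t₁ u₁ * suzH θ ε * suzW * suzXp θ t₂ u₂) :
    g ∈ suzU F θ * suzUm F θ * suzU F θ * suzUm F θ := by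
  -- θ = n + 1
  have hpos : 0 < θ := hθ ▸ pow_pos (by norm_num : (0:ℕ) < 2) m
  obtain ⟨n, hn⟩ : ∃ n, θ = n + 1 := ⟨θ - 1, (Nat.succ_pred_eq_of_pos hpos).symm⟩
  subst hn
  -- characteristic 2
  have hchar : ringChar F = 2 := by
    obtain ⟨k, hk, hcard⟩ := FiniteField.card F (ringChar F)
    have hdvd : ringChar F ∣ 2 ^ (2 * m + 1) := by
      rw [← hF, hcard]
      exact dvd_pow_self _ (by exact_mod_cast k.ne_zero)
    have := hk.dvd_of_dvd_pow hdvd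
    exact (Nat.prime_dvd_prime_iff_eq hk Nat.prime_two).mp this
  haveI : CharP F 2 := hchar ▸ ringChar.charP F
  haveI : Fact (Nat.Prime 2) := ⟨Nat.prime_two⟩
  have h2 : (2 : F) = 0 := by exact_mod_cast CharP.cast_eq_zero F 2
  have hfrob : ∀ x y : F, (x + y) ^ (n+1) = x ^ (n+1) + y ^ (n+1) := by
    intro x y; rw [hθ]; exact add_pow_char_pow x y 2 m
  have hcardpow : ∀ x : F, x ^ (2*n^2+4*n+2) = x := by
    intro x
    have hc : (2:ℕ)^(2*m+1) = 2*n^2+4*n+2 := by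
      rw [show 2*m+1 = m+m+1 by omega, pow_succ, pow_add, ← hθ]; ring
    have := FiniteField.pow_card x
    rwa [hF, hc] at this
  have hq : ∀ x : F, ((x ^ (n+1)) ^ (n+1)) ^ 2 = x := by
    intro x
    calc ((x ^ (n+1)) ^ (n+1)) ^ 2 = x ^ (2*n^2+4*n+2) := by
          rw [← pow_mul, ← pow_mul, show (n+1)*((n+1)*2) = 2*n^2+4*n+2 by ring]
      _ = x := hcardpow x
  -- powers of ε
  have hei1 : ε * ε⁻¹ = 1 := mul_inv_cancel₀ hε
  have eP : ε ^ (2*n^2+4*n+1) = 1 := by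
    have h' : ε ^ (2*n^2+4*n+1) * ε = 1 * ε := by
      rw [one_mul, ← pow_succ, show 2*n^2+4*n+1+1 = 2*n^2+4*n+2 by ring]
      exact hcardpow ε
    exact mul_right_cancel₀ hε h'
  have iP : (ε⁻¹) ^ (2*n^2+4*n+1) = 1 := by
    rw [inv_pow, eP, inv_one]
  -- names
  have hz1 : ε ^ (2 * ((n+1:ℕ) : ℤ) - 1) = ε ^ (2*n+1) := by
    rw [show (2 * ((n+1:ℕ) : ℤ) - 1) = ((2*n+1 : ℕ) : ℤ) by push_cast; ring, zpow_natCast]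
  have hz2 : ε ^ (1 - 2 * ((n+1:ℕ) : ℤ)) = (ε⁻¹) ^ (2*n+1) := by
    rw [show (1 - 2 * ((n+1:ℕ) : ℤ)) = -((2*n+1 : ℕ) : ℤ) by push_cast; ring,
      _root_.zpow_neg, zpow_natCast, ← inv_pow]
  have hH : suzH (n+1) ε = Matrix.diagonal ![ε, ε^(2*n+1), (ε⁻¹)^(2*n+1), ε⁻¹] := by
    unfold suzH
    rw [hz1, hz2]
  have hA0C := suzClaimA n h2 ε ε⁻¹ hei1 iP eP
  have hconj := suzConj n h2 ε ε⁻¹ hei1 iP t₂ u₂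
  have hDD := suzDiagInv n ε ε⁻¹ hei1
  have hcore : Matrix.diagonal ![ε, ε^(2*n+1), (ε⁻¹)^(2*n+1), ε⁻¹] * suzW * suzXp (n+1) t₂ u₂
      = suzXm (n+1) (t₂*(ε⁻¹)^(4*n+2)) (u₂*(ε⁻¹)^(2*n+2))
        * (Matrix.diagonal ![ε, ε^(2*n+1), (ε⁻¹)^(2*n+1), ε⁻¹] * suzW) := by
    rw [← hconj]
    have step : suzW * suzXp (n+1) t₂ u₂ = suzXm (n+1) t₂ u₂ * suzW := by
      rw [suzXm, mul_assoc, mul_assoc, suzW_mul_suzW, mul_one]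
    calc Matrix.diagonal ![ε, ε^(2*n+1), (ε⁻¹)^(2*n+1), ε⁻¹] * suzW * suzXp (n+1) t₂ u₂
        = Matrix.diagonal ![ε, ε^(2*n+1), (ε⁻¹)^(2*n+1), ε⁻¹] * (suzW * suzXp (n+1) t₂ u₂) := by
          simp only [mul_assoc]
      _ = Matrix.diagonal ![ε, ε^(2*n+1), (ε⁻¹)^(2*n+1), ε⁻¹] * (suzXm (n+1) t₂ u₂ * suzW) := by
          rw [step]
      _ = Matrix.diagonal ![ε, ε^(2*n+1), (ε⁻¹)^(2*n+1), ε⁻¹] * suzXm (n+1) t₂ u₂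
            * (Matrix.diagonal ![ε⁻¹, (ε⁻¹)^(2*n+1), ε^(2*n+1), ε]
              * Matrix.diagonal ![ε, ε^(2*n+1), (ε⁻¹)^(2*n+1), ε⁻¹]) * suzW := by
          rw [hDD, mul_one]; simp only [mul_assoc]
      _ = Matrix.diagonal ![ε, ε^(2*n+1), (ε⁻¹)^(2*n+1), ε⁻¹] * suzXm (n+1) t₂ u₂
            * Matrix.diagonal ![ε⁻¹, (ε⁻¹)^(2*n+1), ε^(2*n+1), ε]
            * (Matrix.diagonal ![ε, ε^(2*n+1), (ε⁻¹)^(2*n+1), ε⁻¹] * suzW) := by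
          simp only [mul_assoc]
  -- the four factors
  have hfinal : (↑g : Matrix (Fin 4) (Fin 4) F)
      = suzXp (n+1) t₁ u₁
        * (suzXm (n+1) (t₂*(ε⁻¹)^(4*n+2) + (ε⁻¹)^(2*n+1))
            (u₂*(ε⁻¹)^(2*n+2) + 0 + (t₂*(ε⁻¹)^(4*n+2))^(n+1) * (ε⁻¹)^(2*n+1))
          * (suzXp (n+1) 0 (ε^(n+1)) * suzXm (n+1) ((ε⁻¹)^(2*n+1)) ((ε⁻¹)^(n+1)))) := by
    rw [hg, hH]
    rw [← suzXm_mul n h2 hfrob hq (t₂*(ε⁻¹)^(4*n+2)) (u₂*(ε⁻¹)^(2*n+2)) ((ε⁻¹)^(2*n+1)) 0]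
    calc suzXp (n+1) t₁ u₁ * Matrix.diagonal ![ε, ε^(2*n+1), (ε⁻¹)^(2*n+1), ε⁻¹] * suzW
          * suzXp (n+1) t₂ u₂
        = suzXp (n+1) t₁ u₁
            * (Matrix.diagonal ![ε, ε^(2*n+1), (ε⁻¹)^(2*n+1), ε⁻¹] * suzW * suzXp (n+1) t₂ u₂) := by
          simp only [mul_assoc]
      _ = suzXp (n+1) t₁ u₁
            * (suzXm (n+1) (t₂*(ε⁻¹)^(4*n+2)) (u₂*(ε⁻¹)^(2*n+2))
              * (Matrix.diagonal ![ε, ε^(2*n+1), (ε⁻¹)^(2*n+1), ε⁻¹] * suzW)) := by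
          rw [hcore]
      _ = suzXp (n+1) t₁ u₁
            * (suzXm (n+1) (t₂*(ε⁻¹)^(4*n+2)) (u₂*(ε⁻¹)^(2*n+2))
              * (suzXm (n+1) ((ε⁻¹)^(2*n+1)) 0
                * (suzXp (n+1) 0 (ε^(n+1)) * suzXm (n+1) ((ε⁻¹)^(2*n+1)) ((ε⁻¹)^(n+1))))) := by
          rw [hA0C]
      _ = suzXp (n+1) t₁ u₁
            * (suzXm (n+1) (t₂*(ε⁻¹)^(4*n+2)) (u₂*(ε⁻¹)^(2*n+2))
                * suzXm (n+1) ((ε⁻¹)^(2*n+1)) 0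
              * (suzXp (n+1) 0 (ε^(n+1)) * suzXm (n+1) ((ε⁻¹)^(2*n+1)) ((ε⁻¹)^(n+1)))) := by
          simp only [mul_assoc]
  -- invertibility
  have hXpinv1 : ∀ a b : F, suzXp (n+1) a b * suzXp (n+1) a (b + a^(n+1)*a) = 1 := by
    intro a b
    rw [suzXp_mul n h2 hfrob hq]
    rw [show a + a = 0 by linear_combination a*h2,
      show b + (b + a^(n+1)*a) + a^(n+1)*a = 0 by linear_combination (b + a^(n+1)*a)*h2,
      suzXp_zero]
  have hXpinv2 : ∀ a b : F, suzXp (n+1) a (b + a^(n+1)*a) * suzXp (n+1) a b = 1 := by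
    intro a b
    rw [suzXp_mul n h2 hfrob hq]
    rw [show a + a = 0 by linear_combination a*h2,
      show (b + a^(n+1)*a) + b + a^(n+1)*a = 0 by linear_combination (b + a^(n+1)*a)*h2,
      suzXp_zero]
  have hXminv1 : ∀ a b : F, suzXm (n+1) a b * suzXm (n+1) a (b + a^(n+1)*a) = 1 := by
    intro a b
    rw [suzXm_mul n h2 hfrob hq]
    rw [show a + a = 0 by linear_combination a*h2,
      show b + (b + a^(n+1)*a) + a^(n+1)*a = 0 by linear_combination (b + a^(n+1)*a)*h2,
      suzXm_zero]
  have hXminv2 : ∀ a b : F, suzXm (n+1) a (b + a^(n+1)*a) * suzXm (n+1) a b = 1 := by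
    intro a b
    rw [suzXm_mul n h2 hfrob hq]
    rw [show a + a = 0 by linear_combination a*h2,
      show (b + a^(n+1)*a) + b + a^(n+1)*a = 0 by linear_combination (b + a^(n+1)*a)*h2,
      suzXm_zero]
  let G1 : GL (Fin 4) F :=
    ⟨suzXp (n+1) t₁ u₁, suzXp (n+1) t₁ (u₁ + t₁^(n+1)*t₁), hXpinv1 t₁ u₁, hXpinv2 t₁ u₁⟩
  let S1 : F := t₂*(ε⁻¹)^(4*n+2) + (ε⁻¹)^(2*n+1)
  let S2 : F := u₂*(ε⁻¹)^(2*n+2) + 0 + (t₂*(ε⁻¹)^(4*n+2))^(n+1) * (ε⁻¹)^(2*n+1)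
  let G2 : GL (Fin 4) F :=
    ⟨suzXm (n+1) S1 S2, suzXm (n+1) S1 (S2 + S1^(n+1)*S1), hXminv1 S1 S2, hXminv2 S1 S2⟩
  let G3 : GL (Fin 4) F :=
    ⟨suzXp (n+1) 0 (ε^(n+1)), suzXp (n+1) 0 (ε^(n+1) + 0^(n+1)*0),
      hXpinv1 0 (ε^(n+1)), hXpinv2 0 (ε^(n+1))⟩
  let G4 : GL (Fin 4) F :=
    ⟨suzXm (n+1) ((ε⁻¹)^(2*n+1)) ((ε⁻¹)^(n+1)),
      suzXm (n+1) ((ε⁻¹)^(2*n+1)) ((ε⁻¹)^(n+1) + ((ε⁻¹)^(2*n+1))^(n+1)*(ε⁻¹)^(2*n+1)),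
      hXminv1 _ _, hXminv2 _ _⟩
  have hgprod : g = G1 * G2 * G3 * G4 := by
    apply Units.ext
    simp only [Units.val_mul]
    show (↑g : Matrix (Fin 4) (Fin 4) F)
      = suzXp (n+1) t₁ u₁ * suzXm (n+1) S1 S2
        * suzXp (n+1) 0 (ε^(n+1)) * suzXm (n+1) ((ε⁻¹)^(2*n+1)) ((ε⁻¹)^(n+1))
    rw [hfinal]
    simp only [mul_assoc]
    rfl
  rw [hgprod]
  exact Set.mul_mem_mul (Set.mul_mem_mul (Set.mul_mem_mul
    ⟨t₁, u₁, rfl⟩ ⟨S1, S2, rfl⟩) ⟨0, ε^(n+1), rfl⟩)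
    ⟨(ε⁻¹)^(2*n+1), (ε⁻¹)^(n+1), rfl⟩
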